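/- For a nondominated set Y ⊆ (0,∞)², each point y ∈ Y uniquely minimizes the Tchebycheff utility over Y at the weight w* = y₂/(y₁ + y₂), i.e., max(w*·y₁, (1−w*)·y₂) < max(w*·z₁, (1−w*)·z₂) for all z ∈ Y with z ≠ y. -/

import Mathlib

theorem unique_minimizer_at_wstar (Y : Set (ℝ × ℝ))
    (hpos : ∀ y ∈ Y, 0 < y.1 ∧ 0 < y.2)
    (hnd : ∀ y ∈ Y, ∀ z ∈ Y, z ≠ y → ¬ (z.1 ≤ y.1 ∧ z.2 ≤ y.2)) :
    ∀ y ∈ Y, ∀ z ∈ Y, z ≠ y →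
      max ((y.2 / (y.1 + y.2)) * y.1) ((1 - y.2 / (y.1 + y.2)) * y.2) <
      max ((y.2 / (y.1 + y.2)) * z.1) ((1 - y.2 / (y.1 + y.2)) * z.2) := by
  intro y hy z hz hne
  obtain ⟨hy1, hy2⟩ := hpos y hy
  obtain ⟨hz1, hz2⟩ := hpos z hz
  have hs : 0 < y.1 + y.2 := by linarith
  have h1w : 1 - y.2 / (y.1 + y.2) = y.1 / (y.1 + y.2) := by
    field_simp
    ring
  have heq : (y.2 / (y.1 + y.2)) * y.1 = (y.1 / (y.1 + y.2)) * y.2 := by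
    ring
  rw [h1w, heq, max_self]
  have hdom := hnd y hy z hz hne
  rcases not_and_or.mp hdom with h | h
  · push_neg at h
    exact lt_max_of_lt_left (by
      rw [← heq]
      exact mul_lt_mul_of_pos_left h (div_pos hy2 hs))
  · push_neg at h
    exact lt_max_of_lt_right (mul_lt_mul_of_pos_left h (div_pos hy1 hs))
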